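/- Let B be a complete Boolean algebra, p ∈ B⁺, and w : 2^{<ω} → B with 0 ≤ w_φ ≤ p for all φ ∈ 2^{<ω}. If w satisfies (∗) below p, then the set S = {φ ∈ 2^{<ω} : w_φ ∈ {0, p}} is not dense in the ordering (2^{<ω}, ⊇); that is, there exists ψ ∈ 2^{<ω} such that w_φ ∈ (0,p) (i.e., 0 < w_φ < p) for every φ ∈ 2^{<ω} extending ψ. -/

import Mathlib

/-- For `p ∈ B⁺` and a move `q ≤ p`, Black's choice: `q⁰ = q`, `q¹ = p \ q`. -/
def pickMove {B : Type*} [CompleteBooleanAlgebra B] (p q : B) (i : Bool) : B :=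
  if i then p \ q else q

section Games

variable {B : Type*} [CompleteBooleanAlgebra B]

/-- White wins a play of `G₁` iff `⨅ₙ pₙ^{iₙ} = 0`. -/
def WinG1 (p : B) (pn : ℕ → B) (i : ℕ → Bool) : Prop :=
  (⨅ n, pickMove p (pn n) (i n)) = ⊥

/-- White wins a play of `G₂` iff `⨆ₖ ⨅_{n ≥ k} pₙ^{iₙ} = 0`. -/
def WinG2 (p : B) (pn : ℕ → B) (i : ℕ → Bool) : Prop :=
  (⨆ k, ⨅ n, ⨅ _ : k ≤ n, pickMove p (pn n) (i n)) = ⊥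

/-- White wins a play of `G₃` iff `⨆_{A ⊆ ω infinite} ⨅_{n ∈ A} pₙ^{iₙ} = 0`. -/
def WinG3 (p : B) (pn : ℕ → B) (i : ℕ → Bool) : Prop :=
  (⨆ A ∈ {A : Set ℕ | A.Infinite}, ⨅ n ∈ A, pickMove p (pn n) (i n)) = ⊥

/-- White wins a play of `G₄` iff `⨅ₖ ⨆_{n ≥ k} pₙ^{iₙ} = 0`. -/
def WinG4 (p : B) (pn : ℕ → B) (i : ℕ → Bool) : Prop :=
  (⨅ k, ⨆ n, ⨆ _ : k ≤ n, pickMove p (pn n) (i n)) = ⊥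

/-- White's moves when following strategy `σ` against Black's play `i`:
the `n`-th move depends on Black's first `n` moves. -/
def whitePlays (σ : List Bool → B) (i : ℕ → Bool) (n : ℕ) : B :=
  σ (List.ofFn fun k : Fin n => i k)

/-- Black's moves when following strategy `τ` against White's play `p, p₀, p₁, …`:
the `n`-th move depends on `p` and on `p₀, …, pₙ`. -/
def blackPlays (τ : B → List B → Bool) (p : B) (pn : ℕ → B) (n : ℕ) : Bool :=
  τ p (List.ofFn fun k : Fin (n + 1) => pn k)

/-- White has a winning strategy in the game with winning condition `Win`:
an initial move `p ∈ B⁺` and a rule `σ` giving legal moves in `(0,p)`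
such that White wins every play in which he follows it. -/
def WhiteWS (Win : B → (ℕ → B) → (ℕ → Bool) → Prop) : Prop :=
  ∃ p : B, p ≠ ⊥ ∧ ∃ σ : List Bool → B,
    (∀ s : List Bool, σ s ∈ Set.Ioo ⊥ p) ∧
    ∀ i : ℕ → Bool, Win p (whitePlays σ i) i

/-- Black has a winning strategy in the game with winning condition `Win`:
a rule `τ` such that for every legal play of White, Black following `τ` wins
(i.e. White does not win). -/
def BlackWS (Win : B → (ℕ → B) → (ℕ → Bool) → Prop) : Prop :=
  ∃ τ : B → List B → Bool,
    ∀ p : B, p ≠ ⊥ → ∀ pn : ℕ → B, (∀ n, pn n ∈ Set.Ioo ⊥ p) →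
      ¬ Win p pn (blackPlays τ p pn)

/-- `aⁱ` for `i ∈ {0,1}`: `a⁰ = a`, `a¹ = aᶜ`. -/
def compPow (a : B) (i : Bool) : B :=
  if i then aᶜ else a

end Games

/-- A complete Boolean algebra is `(ω,2)`-distributive iff
`⨆_{f : ω → 2} ⨅ₙ aₙ^{f(n)} = 1` for every sequence `⟨aₙ⟩`. -/
def OmegaTwoDistributive (B : Type*) [CompleteBooleanAlgebra B] : Prop :=
  ∀ a : ℕ → B, (⨆ f : ℕ → Bool, ⨅ n, compPow (a n) (f n)) = ⊤

/-- `w : 2^{<ω} → B` satisfies (∗) below `p`: for every `i : ω → 2`,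
`⨆_{A ⊆ ω infinite} ⨅_{n ∈ A} w_{i↾n}^{i(n)} = 0`. -/
def SatisfiesStar {B : Type*} [CompleteBooleanAlgebra B] (p : B) (w : List Bool → B) : Prop :=
  ∀ i : ℕ → Bool,
    (⨆ A ∈ {A : Set ℕ | A.Infinite}, ⨅ n ∈ A,
      pickMove p (w (List.ofFn fun k : Fin n => i k)) (i n)) = ⊥

/-- If `w : 2^{<ω} → [0,p]` satisfies (∗) below `p`, then
`{φ : w_φ ∈ {0,p}}` is not dense in `(2^{<ω}, ⊇)`: there is `ψ` such that
`w_φ ∈ (0,p)` for every `φ` extending `ψ`. -/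

private lemma prefix_getD_aux {α : Type*} (d : α) {l₁ l₂ : List α} (h : l₁ <+: l₂) {n : ℕ}
    (hn : n < l₁.length) : l₁.getD n d = l₂.getD n d := by
  obtain ⟨t, rfl⟩ := h
  rw [List.getD_eq_getElem?_getD, List.getD_eq_getElem?_getD,
    List.getElem?_append_left hn]

theorem stmt_6 {B : Type*} [CompleteBooleanAlgebra B] (p : B) (hp : p ≠ ⊥)
    (w : List Bool → B) (hw : ∀ φ : List Bool, w φ ≤ p)
    (hstar : SatisfiesStar p w) :
    ∃ ψ : List Bool, ∀ φ : List Bool, ψ <+: φ → w φ ∈ Set.Ioo ⊥ p := by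
  by_contra hcon
  push_neg at hcon
  choose φ hpre hno using hcon
  classical
  set bit : List Bool → Bool := fun s => decide (w (φ s) = ⊥) with hbitdef
  have hpick : ∀ s, pickMove p (w (φ s)) (bit s) = p := by
    intro s
    have h1 : w (φ s) = ⊥ ∨ w (φ s) = p := by
      rcases eq_or_ne (w (φ s)) ⊥ with h | h
      · exact Or.inl h
      rcases eq_or_ne (w (φ s)) p with h2 | h2
      · exact Or.inr h2
      exact absurd ⟨bot_lt_iff_ne_bot.mpr h, lt_of_le_of_ne (hw _) h2⟩ (hno s)
    rcases h1 with h | h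
    · simp [hbitdef, pickMove, h]
    · have hb : bit s = false := by
        simp only [hbitdef, decide_eq_false_iff_not, h]
        exact fun hpb => hp hpb
      simp [pickMove, hb, h]
  set L : ℕ → List Bool := fun k => Nat.rec [] (fun _ s => φ s ++ [bit s]) k with hLdef
  have hLsucc : ∀ k, L (k + 1) = φ (L k) ++ [bit (L k)] := fun k => rfl
  have hL1 : ∀ k, L k <+: L (k + 1) := fun k =>
    (hpre (L k)).trans (by rw [hLsucc]; exact List.prefix_append _ _)
  have hLmono : ∀ k m, k ≤ m → L k <+: L m := by
    intro k m hkm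
    induction m, hkm using Nat.le_induction with
    | base => exact List.prefix_rfl
    | succ m hm ih => exact ih.trans (hL1 m)
  have hlen : ∀ k, k ≤ (L k).length := by
    intro k
    induction k with
    | zero => simp
    | succ k ih =>
      have := (hpre (L k)).length_le
      rw [hLsucc]
      simp only [List.length_append, List.length_cons, List.length_nil]
      omega
  set i : ℕ → Bool := fun n => (L (n + 1)).getD n false with hidef
  have hcoh : ∀ k n, n < (L k).length → (L k).getD n false = i n := by
    intro k n hn
    rcases le_total k (n + 1) with h | h
    · exact prefix_getD_aux false (hLmono k (n + 1) h) hn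
    · exact (prefix_getD_aux false (hLmono (n + 1) k h)
        (lt_of_lt_of_le (Nat.lt_succ_self n) (hlen (n + 1)))).symm
  have htake : ∀ k n, n ≤ (L k).length →
      (List.ofFn fun j : Fin n => i j) = (L k).take n := by
    intro k n hn
    apply List.ext_getElem
    · simp [Nat.min_eq_left hn]
    · intro j hj1 hj2
      simp only [List.getElem_ofFn, List.getElem_take]
      have hjn : j < n := by simpa using hj1
      have hjL : j < (L k).length := lt_of_lt_of_le hjn hn
      rw [← hcoh k j hjL, List.getD_eq_getElem _ _ hjL]
  have hterm : ∀ k, pickMove p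
      (w (List.ofFn fun j : Fin ((φ (L k)).length) => i j)) (i ((φ (L k)).length)) = p := by
    intro k
    set n := (φ (L k)).length with hndef
    have hlenk : (L (k + 1)).length = n + 1 := by rw [hLsucc]; simp [hndef]
    have h1 : (List.ofFn fun j : Fin n => i j) = φ (L k) := by
      rw [htake (k + 1) n (by omega)]
      rw [hLsucc]
      exact List.take_left
    have h2 : i n = bit (L k) := by
      rw [← hcoh (k + 1) n (by omega)]
      rw [hLsucc, List.getD_eq_getElem _ _
        (by simp only [List.length_append, List.length_cons, List.length_nil]; omega)]
      simp [List.getElem_append_right, hndef]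
    rw [h1, h2]
    exact hpick (L k)
  have hsm : StrictMono (fun k => (φ (L k)).length) := by
    apply strictMono_nat_of_lt_succ
    intro k
    have h1 : (L (k + 1)).length = (φ (L k)).length + 1 := by rw [hLsucc]; simp
    have h2 := (hpre (L (k + 1))).length_le
    omega
  have hAinf : (Set.range fun k => (φ (L k)).length).Infinite :=
    Set.infinite_range_of_injective hsm.injective
  have h0 := hstar i
  have hle : p ≤ ⨆ A ∈ {A : Set ℕ | A.Infinite}, ⨅ n ∈ A,
      pickMove p (w (List.ofFn fun j : Fin n => i j)) (i n) := by
    refine le_trans ?_ (le_biSup _ hAinf)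
    refine le_iInf₂ fun n hn => ?_
    obtain ⟨k, rfl⟩ := hn
    exact (hterm k).ge
  rw [h0] at hle
  exact hp (le_bot_iff.mp hle)
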